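/- Let (g, r) be a quasitriangular Lie bialgebra. Then the underlying vector space of g, with the Lie bracket of g, the adjoint action of g, and the braided cobracket δ̲x = 2r₊⁽¹⁾ ⊗ [x, r₊⁽²⁾], is a braided-Lie bialgebra in the category of g-modules (the transmutation g̲ of g). In particular dδ̲ = ψ, i.e. δ̲([a,b]) = ad_a(δ̲b) − ad_b(δ̲a) − ψ(a⊗b), where ψ(a⊗b) = 2r₊ ▷ (a⊗b − b⊗a) is the infinitesimal braiding. -/

import Mathlib

open TensorProduct LinearMap Module

namespace Trip

variable {k : Type*} [Field k]
variable {M : Type*} [AddCommGroup M] [Module k M]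

variable (k M) in
/-- The tensor flip `τ`. -/
noncomputable def τ : M ⊗[k] M ≃ₗ[k] M ⊗[k] M := TensorProduct.comm k M M

variable (k M) in
/-- Cyclic rotation `x⊗y⊗z ↦ z⊗x⊗y` on the triple tensor product. -/
noncomputable def ρ : M ⊗[k] (M ⊗[k] M) ≃ₗ[k] M ⊗[k] (M ⊗[k] M) :=
  (TensorProduct.assoc k M M M).symm ≪≫ₗ TensorProduct.comm k (M ⊗[k] M) M

/-- The bracket as a map on the tensor square. -/
noncomputable def brM (B : M →ₗ[k] M →ₗ[k] M) : M ⊗[k] M →ₗ[k] M := TensorProduct.lift B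

variable (B : M →ₗ[k] M →ₗ[k] M)

/-- `(a⊗b)⊗(c⊗d) ↦ [a,c]⊗b⊗d`, the `[r₁₂,s₁₃]` component of the Schouten bracket. -/
noncomputable def s1213 : (M ⊗[k] M) ⊗[k] (M ⊗[k] M) →ₗ[k] M ⊗[k] (M ⊗[k] M) :=
  (TensorProduct.map (brM B) LinearMap.id) ∘ₗ (tensorTensorTensorComm k M M M M).toLinearMap

/-- `(a⊗b)⊗(c⊗d) ↦ a⊗[b,c]⊗d`, the `[r₁₂,s₂₃]` component. -/
noncomputable def s1223 : (M ⊗[k] M) ⊗[k] (M ⊗[k] M) →ₗ[k] M ⊗[k] (M ⊗[k] M) :=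
  (LinearMap.lTensor M ((TensorProduct.map (brM B) LinearMap.id) ∘ₗ
      (TensorProduct.assoc k M M M).symm.toLinearMap)) ∘ₗ
    (TensorProduct.assoc k M M (M ⊗[k] M)).toLinearMap

/-- `(a⊗b)⊗(c⊗d) ↦ a⊗c⊗[b,d]`, the `[r₁₃,s₂₃]` component. -/
noncomputable def s1323 : (M ⊗[k] M) ⊗[k] (M ⊗[k] M) →ₗ[k] M ⊗[k] (M ⊗[k] M) :=
  (LinearMap.lTensor M ((LinearMap.lTensor M (brM B)) ∘ₗ
      ((TensorProduct.assoc k M M M).toLinearMap ∘ₗ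
        (TensorProduct.map (TensorProduct.comm k M M).toLinearMap LinearMap.id) ∘ₗ
          (TensorProduct.assoc k M M M).symm.toLinearMap))) ∘ₗ
    (TensorProduct.assoc k M M (M ⊗[k] M)).toLinearMap

/-- The Schouten bracket `[[r,s]] = [r₁₂,s₁₃] + [r₁₂,s₂₃] + [r₁₃,s₂₃]`. -/
noncomputable def schouten (r s : M ⊗[k] M) : M ⊗[k] (M ⊗[k] M) :=
  (s1213 B) (r ⊗ₜ s) + (s1223 B) (r ⊗ₜ s) + (s1323 B) (r ⊗ₜ s)

/-- The extension of the adjoint-type action `B x` to the tensor square. -/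
noncomputable def adT (x : M) : M ⊗[k] M →ₗ[k] M ⊗[k] M :=
  TensorProduct.map (B x) LinearMap.id + TensorProduct.map LinearMap.id (B x)

/-- The extension of the adjoint-type action `B x` to the triple tensor product. -/
noncomputable def adT3 (x : M) : M ⊗[k] (M ⊗[k] M) →ₗ[k] M ⊗[k] (M ⊗[k] M) :=
  TensorProduct.map (B x) LinearMap.id + LinearMap.lTensor M (adT B x)

/-- The coboundary `δ_r : x ↦ ad_x(r)` of an element `r ∈ M⊗M`, as a linear map. -/
noncomputable def cobdryL (r : M ⊗[k] M) : M →ₗ[k] M ⊗[k] M where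
  toFun x := adT B x r
  map_add' x y := by
    simp [adT, map_add, TensorProduct.map_add_left, TensorProduct.map_add_right,
      LinearMap.add_apply]
    abel
  map_smul' c x := by
    simp [adT, map_smul, TensorProduct.map_smul_left, TensorProduct.map_smul_right,
      LinearMap.add_apply, LinearMap.smul_apply, smul_add]

/-- `B` is a Lie bracket: alternating and satisfying the (Leibniz form of the) Jacobi identity. -/
def IsLieBr : Prop :=
  (∀ x, B x x = 0) ∧ ∀ x y z, B x (B y z) = B (B x y) z + B y (B x z)

/-- Anticocommutativity `δ + τ∘δ = 0`. -/
def Antico (δ : M →ₗ[k] M ⊗[k] M) : Prop := ∀ x, δ x + (τ k M) (δ x) = 0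

/-- The co-Jacobi identity `(δ⊗id)∘δ + cyclic = 0`. -/
def CoJacobi (δ : M →ₗ[k] M ⊗[k] M) : Prop :=
  ∀ x, (TensorProduct.assoc k M M M) ((TensorProduct.map δ LinearMap.id) (δ x)) +
      (ρ k M) ((TensorProduct.assoc k M M M) ((TensorProduct.map δ LinearMap.id) (δ x))) +
      (ρ k M) ((ρ k M) ((TensorProduct.assoc k M M M)
        ((TensorProduct.map δ LinearMap.id) (δ x)))) = 0

/-- The 1-cocycle compatibility `δ[x,y] = ad_x(δ y) − ad_y(δ x)`. -/
def Cocycle (δ : M →ₗ[k] M ⊗[k] M) : Prop :=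
  ∀ x y, δ (B x y) = adT B x (δ y) - adT B y (δ x)

/-- `(M, B, δ)` is a Lie bialgebra. -/
def IsLieBialg (δ : M →ₗ[k] M ⊗[k] M) : Prop :=
  IsLieBr B ∧ Antico δ ∧ CoJacobi δ ∧ Cocycle B δ

/-- The classical Yang–Baxter equation `[[r,r]] = 0`. -/
def CYBE (r : M ⊗[k] M) : Prop := schouten B r r = 0

/-- `(M, B, r)` is a quasitriangular Lie bialgebra: `r` satisfies the CYBE, its symmetric
part is ad-invariant, and the coboundary `δ = ad_•(r)` makes `M` a Lie bialgebra. -/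
def IsQT (r : M ⊗[k] M) : Prop :=
  CYBE B r ∧ (∀ x, adT B x (r + (τ k M) r) = 0) ∧ IsLieBialg B (cobdryL B r)

section contr
variable {N : Type*} [AddCommGroup N] [Module k N]

/-- Contraction against the first tensor factor: `a⊗b ↦ φ(a) • b`. -/
noncomputable def contr1 (φ : Module.Dual k N) : N ⊗[k] N →ₗ[k] N :=
  (TensorProduct.lid k N).toLinearMap ∘ₗ TensorProduct.map φ LinearMap.id

/-- Contraction against the second tensor factor: `a⊗b ↦ φ(b) • a`. -/
noncomputable def contr2 (φ : Module.Dual k N) : N ⊗[k] N →ₗ[k] N :=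
  (TensorProduct.rid k N).toLinearMap ∘ₗ TensorProduct.map LinearMap.id φ

end contr

/-- The bracket on the dual space obtained by dualising a cobracket `δ`. -/
noncomputable def dualBr (δ : M →ₗ[k] M ⊗[k] M) :
    Module.Dual k M →ₗ[k] Module.Dual k M →ₗ[k] Module.Dual k M :=
  LinearMap.compr₂ (TensorProduct.mk k (Module.Dual k M) (Module.Dual k M))
    (δ.dualMap ∘ₗ TensorProduct.dualDistrib k M M)

/-- The cobracket on the dual space obtained by dualising the bracket `B`
(finite-dimensional case). -/
noncomputable def dualCo [FiniteDimensional k M] :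
    Module.Dual k M →ₗ[k] Module.Dual k M ⊗[k] Module.Dual k M :=
  (TensorProduct.dualDistribEquiv k M M).symm.toLinearMap ∘ₗ (brM B).dualMap

end Trip

namespace Trip

variable {k : Type*} [Field k] {M : Type*} [AddCommGroup M] [Module k M]
variable (B : M →ₗ[k] M →ₗ[k] M)

/-- The braided cobracket of the transmutation: `δ̲x = 2r₊⁽¹⁾ ⊗ [x, r₊⁽²⁾]`. -/
noncomputable def bco (r : M ⊗[k] M) : M →ₗ[k] M ⊗[k] M where
  toFun x := (LinearMap.lTensor M (B x)) (r + (τ k M) r)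
  map_add' x y := by
    simp [map_add, LinearMap.lTensor_add, LinearMap.add_apply]; abel
  map_smul' c x := by
    simp [map_smul, LinearMap.lTensor_smul, LinearMap.smul_apply]

/-- The action of an element `t ∈ g⊗g` on `M⊗M`, each tensor factor of `t` acting on the
corresponding factor: `(x⊗y) ▷ (a⊗b) = [x,a]⊗[y,b]`. -/
noncomputable def actOf (t : M ⊗[k] M) : M ⊗[k] M →ₗ[k] M ⊗[k] M :=
  TensorProduct.lift (LinearMap.mk₂ k (fun x y => TensorProduct.map (B x) (B y))
    (fun x x' y => by simp [map_add, TensorProduct.map_add_left])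
    (fun c x y => by simp [map_smul, TensorProduct.map_smul_left])
    (fun x y y' => by simp [map_add, TensorProduct.map_add_right])
    (fun c x y => by simp [map_smul, TensorProduct.map_smul_right])) t

/-- The infinitesimal braiding `ψ(a⊗b) = 2r₊ ▷ (a⊗b − b⊗a)`. -/
noncomputable def infBr (r : M ⊗[k] M) (a b : M) : M ⊗[k] M :=
  actOf B (r + (τ k M) r) (a ⊗ₜ b - b ⊗ₜ a)

end Trip


namespace S7

open TensorProduct LinearMap

variable {k : Type*} [Field k]
variable {M : Type*} [AddCommGroup M] [Module k M]

lemma mapNegLeft {N1 N2 N3 N4 : Type*} [AddCommGroup N1] [AddCommGroup N2]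
    [AddCommGroup N3] [AddCommGroup N4] [Module k N1] [Module k N2] [Module k N3] [Module k N4]
    (f : N1 →ₗ[k] N2) (g : N3 →ₗ[k] N4) :
    TensorProduct.map (-f) g = - TensorProduct.map f g :=
  TensorProduct.ext' fun a b => by simp [neg_tmul]

lemma mapNegRight {N1 N2 N3 N4 : Type*} [AddCommGroup N1] [AddCommGroup N2]
    [AddCommGroup N3] [AddCommGroup N4] [Module k N1] [Module k N2] [Module k N3] [Module k N4]
    (f : N1 →ₗ[k] N2) (g : N3 →ₗ[k] N4) :
    TensorProduct.map f (-g) = - TensorProduct.map f g :=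
  TensorProduct.ext' fun a b => by simp [tmul_neg]

lemma mapSubRight {N1 N2 N3 N4 : Type*} [AddCommGroup N1] [AddCommGroup N2]
    [AddCommGroup N3] [AddCommGroup N4] [Module k N1] [Module k N2] [Module k N3] [Module k N4]
    (f : N1 →ₗ[k] N2) (g g' : N3 →ₗ[k] N4) :
    TensorProduct.map f (g - g') = TensorProduct.map f g - TensorProduct.map f g' :=
  TensorProduct.ext' fun a b => by simp [tmul_sub]

lemma mapSplit {N1 N2 N3 N4 : Type*} [AddCommGroup N1] [AddCommGroup N2]
    [AddCommGroup N3] [AddCommGroup N4] [Module k N1] [Module k N2] [Module k N3] [Module k N4]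
    (f : N1 →ₗ[k] N2) (g : N3 →ₗ[k] N4) (w : N1 ⊗[k] N3) :
    TensorProduct.map f g w
      = TensorProduct.map f LinearMap.id (TensorProduct.map LinearMap.id g w) := by
  have h := TensorProduct.map_comp f (LinearMap.id (M := N4)) (LinearMap.id (M := N1)) g
  rw [LinearMap.comp_id, LinearMap.id_comp] at h
  rw [h]; rfl

lemma mapSplit' {N1 N2 N3 N4 : Type*} [AddCommGroup N1] [AddCommGroup N2]
    [AddCommGroup N3] [AddCommGroup N4] [Module k N1] [Module k N2] [Module k N3] [Module k N4]
    (f : N1 →ₗ[k] N2) (g : N3 →ₗ[k] N4) (w : N1 ⊗[k] N3) :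
    TensorProduct.map f g w
      = TensorProduct.map LinearMap.id g (TensorProduct.map f LinearMap.id w) := by
  have h := TensorProduct.map_comp (LinearMap.id (M := N2)) g f (LinearMap.id (M := N3))
  rw [LinearMap.comp_id, LinearMap.id_comp] at h
  rw [h]; rfl

lemma mapCompL (f g : M →ₗ[k] M) (w : M ⊗[k] M) :
    TensorProduct.map (f ∘ₗ g) LinearMap.id w
      = TensorProduct.map f LinearMap.id (TensorProduct.map g LinearMap.id w) := by
  have h := TensorProduct.map_comp f (LinearMap.id (M := M)) g (LinearMap.id (M := M))
  rw [LinearMap.comp_id] at h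
  rw [h]; rfl

lemma mapCompR (f g : M →ₗ[k] M) (w : M ⊗[k] M) :
    TensorProduct.map LinearMap.id (f ∘ₗ g) w
      = TensorProduct.map LinearMap.id f (TensorProduct.map LinearMap.id g w) := by
  have h := TensorProduct.map_comp (LinearMap.id (M := M)) f (LinearMap.id (M := M)) g
  rw [LinearMap.comp_id] at h
  rw [h]; rfl

lemma commComm (w : M ⊗[k] M) :
    (TensorProduct.comm k M M) ((TensorProduct.comm k M M) w) = w := by
  induction w using TensorProduct.induction_on with
  | zero => simp
  | tmul a b => simp
  | add u v hu hv => simp [map_add, hu, hv]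

lemma commMap (f g : M →ₗ[k] M) (w : M ⊗[k] M) :
    (TensorProduct.comm k M M) (TensorProduct.map f g w)
      = TensorProduct.map g f ((TensorProduct.comm k M M) w) := by
  induction w using TensorProduct.induction_on with
  | zero => simp
  | tmul a b => simp
  | add u v hu hv => simp [map_add, hu, hv]

variable (k M) in
/-- swap of the first two factors of a triple tensor product. -/
noncomputable def s12 : M ⊗[k] (M ⊗[k] M) →ₗ[k] M ⊗[k] (M ⊗[k] M) :=
  (TensorProduct.assoc k M M M).toLinearMap ∘ₗ
    (TensorProduct.map (TensorProduct.comm k M M).toLinearMap LinearMap.id) ∘ₗ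
      (TensorProduct.assoc k M M M).symm.toLinearMap

@[simp] lemma s12_tmul (a b c : M) :
    s12 k M (a ⊗ₜ[k] (b ⊗ₜ[k] c)) = b ⊗ₜ[k] (a ⊗ₜ[k] c) := by
  simp [s12]

variable (k M) in
/-- `(u⊗v)⊗m ↦ u⊗(m⊗v)`. -/
noncomputable def sig : (M ⊗[k] M) ⊗[k] M →ₗ[k] M ⊗[k] (M ⊗[k] M) :=
  (LinearMap.lTensor M (TensorProduct.comm k M M).toLinearMap) ∘ₗ
    (TensorProduct.assoc k M M M).toLinearMap

@[simp] lemma sig_tmul (a b c : M) :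
    sig k M ((a ⊗ₜ[k] b) ⊗ₜ[k] c) = a ⊗ₜ[k] (c ⊗ₜ[k] b) := by
  simp [sig]

variable (B : M →ₗ[k] M →ₗ[k] M) (s : M ⊗[k] M) (x : M)

/-- `a ↦ (B a ⊗ id) s`. -/
noncomputable def Jm : M →ₗ[k] M ⊗[k] M where
  toFun a := TensorProduct.map (B a) LinearMap.id s
  map_add' a b := by simp [map_add, TensorProduct.map_add_left, LinearMap.add_apply]
  map_smul' c a := by simp [map_smul, TensorProduct.map_smul_left, LinearMap.smul_apply]

@[simp] lemma Jm_apply (a : M) :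
    Jm B s a = TensorProduct.map (B a) LinearMap.id s := rfl

/-- `c⊗d ↦ assoc(((flip B c ⊗ id) s) ⊗ d)`. -/
noncomputable def Th : M ⊗[k] M →ₗ[k] M ⊗[k] (M ⊗[k] M) :=
  TensorProduct.lift (LinearMap.mk₂ k
    (fun c d => (TensorProduct.assoc k M M M)
      ((TensorProduct.map (B.flip c) LinearMap.id s) ⊗ₜ[k] d))
    (fun c c' d => by
      simp [map_add, TensorProduct.map_add_left, LinearMap.add_apply, add_tmul])
    (fun t c d => by
      simp only [map_smul, TensorProduct.map_smul_left, LinearMap.smul_apply,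
        ← TensorProduct.smul_tmul'])
    (fun c d d' => by simp [tmul_add])
    (fun t c d => by simp [tmul_smul]))

@[simp] lemma Th_tmul (c d : M) :
    Th B s (c ⊗ₜ[k] d) = (TensorProduct.assoc k M M M)
      ((TensorProduct.map (B.flip c) LinearMap.id s) ⊗ₜ[k] d) := by
  simp [Th]

/-- `c⊗d ↦ assoc(((flip B c ⊗ B x) s) ⊗ d)`. -/
noncomputable def Th2 : M ⊗[k] M →ₗ[k] M ⊗[k] (M ⊗[k] M) :=
  TensorProduct.lift (LinearMap.mk₂ k
    (fun c d => (TensorProduct.assoc k M M M)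
      ((TensorProduct.map (B.flip c) (B x) s) ⊗ₜ[k] d))
    (fun c c' d => by
      simp [map_add, TensorProduct.map_add_left, LinearMap.add_apply, add_tmul])
    (fun t c d => by
      simp only [map_smul, TensorProduct.map_smul_left, LinearMap.smul_apply,
        ← TensorProduct.smul_tmul'])
    (fun c d d' => by simp [tmul_add])
    (fun t c d => by simp [tmul_smul]))

@[simp] lemma Th2_tmul (c d : M) :
    Th2 B s x (c ⊗ₜ[k] d) = (TensorProduct.assoc k M M M)
      ((TensorProduct.map (B.flip c) (B x) s) ⊗ₜ[k] d) := by
  simp [Th2]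

/-- `a⊗b ↦ sig(((B a ⊗ id) s) ⊗ (B x b))`. -/
noncomputable def Lam : M ⊗[k] M →ₗ[k] M ⊗[k] (M ⊗[k] M) :=
  TensorProduct.lift (LinearMap.mk₂ k
    (fun a b => sig k M ((TensorProduct.map (B a) LinearMap.id s) ⊗ₜ[k] (B x b)))
    (fun a a' b => by
      simp [map_add, TensorProduct.map_add_left, LinearMap.add_apply, add_tmul])
    (fun t a b => by
      simp only [map_smul, TensorProduct.map_smul_left, LinearMap.smul_apply,
        ← TensorProduct.smul_tmul'])
    (fun a b b' => by simp [map_add, tmul_add])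
    (fun t a b => by simp [map_smul, tmul_smul]))

@[simp] lemma Lam_tmul (a b : M) :
    Lam B s x (a ⊗ₜ[k] b)
      = sig k M ((TensorProduct.map (B a) LinearMap.id s) ⊗ₜ[k] (B x b)) := by
  simp [Lam]

/-- `(a⊗b)⊗(c⊗d) ↦ [a,c] ⊗ ([x,b] ⊗ d)`. -/
noncomputable def Xi2 : (M ⊗[k] M) ⊗[k] (M ⊗[k] M) →ₗ[k] M ⊗[k] (M ⊗[k] M) :=
  (TensorProduct.map (Trip.brM B) (TensorProduct.map (B x) LinearMap.id)) ∘ₗ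
    (tensorTensorTensorComm k M M M M).toLinearMap

@[simp] lemma Xi2_tmul (a b c d : M) :
    Xi2 B x ((a ⊗ₜ[k] b) ⊗ₜ[k] (c ⊗ₜ[k] d)) = (B a c) ⊗ₜ[k] ((B x b) ⊗ₜ[k] d) := by
  simp [Xi2, Trip.brM]

end S7

/-- For a quasitriangular Lie bialgebra `(g,r)`, the underlying space of `g`
with the bracket of `g`, the adjoint action, and braided cobracket
`δ̲x = 2r₊⁽¹⁾ ⊗ [x, r₊⁽²⁾]` is a braided-Lie bialgebra in the category of `g`-modules
(the transmutation `g̲`): the bracket and cobracket are covariant, `δ̲` is a Lie cobracket,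
and `dδ̲ = ψ`, i.e. `δ̲([a,b]) = ad_a(δ̲b) − ad_b(δ̲a) − ψ(a⊗b)`. -/
theorem statement7 {k : Type*} [Field k] {M : Type*} [AddCommGroup M] [Module k M]
    (B : M →ₗ[k] M →ₗ[k] M) (r : M ⊗[k] M) (h : Trip.IsQT B r) :
    (∀ ξ x y : M, B ξ (B x y) = B (B ξ x) y + B x (B ξ y)) ∧
    (∀ ξ x : M, Trip.bco B r (B ξ x) = Trip.adT B ξ (Trip.bco B r x)) ∧
    Trip.Antico (Trip.bco B r) ∧ Trip.CoJacobi (Trip.bco B r) ∧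
    (∀ a b : M, Trip.bco B r (B a b) =
      Trip.adT B a (Trip.bco B r b) - Trip.adT B b (Trip.bco B r a) - Trip.infBr B r a b) := by
  obtain ⟨-, hinvQT, ⟨⟨halt, hjac⟩, -, -, -⟩⟩ := h
  set s : M ⊗[k] M := r + (Trip.τ k M) r with hs
  have hskew : ∀ a b : M, B a b = - B b a := by
    intro a b
    have h0 := halt (a + b)
    simp only [map_add, LinearMap.add_apply, halt a, halt b, zero_add, add_zero] at h0
    exact eq_neg_of_add_eq_zero_right h0
  have hflip : ∀ a : M, B.flip a = - B a := by
    intro a; ext z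
    simp only [LinearMap.flip_apply, LinearMap.neg_apply]
    exact hskew z a
  have hbco : ∀ z : M, Trip.bco B r z = TensorProduct.map LinearMap.id (B z) s :=
    fun z => rfl
  have hadT : ∀ (z : M) (w : M ⊗[k] M), Trip.adT B z w
      = TensorProduct.map (B z) LinearMap.id w + TensorProduct.map LinearMap.id (B z) w :=
    fun z w => rfl
  have hinv0 : ∀ z : M, TensorProduct.map (B z) LinearMap.id s
      + TensorProduct.map LinearMap.id (B z) s = 0 := by
    intro z
    have hh := hinvQT z
    rw [hadT] at hh
    exact hh
  have hinv1 : ∀ z : M, TensorProduct.map LinearMap.id (B z) s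
      = - TensorProduct.map (B z) LinearMap.id s :=
    fun z => eq_neg_of_add_eq_zero_right (hinv0 z)
  have hinv2 : ∀ z : M, TensorProduct.map (B z) LinearMap.id s
      = - TensorProduct.map LinearMap.id (B z) s :=
    fun z => eq_neg_of_add_eq_zero_left (hinv0 z)
  have hτc : ∀ w : M ⊗[k] M, (Trip.τ k M) w = (TensorProduct.comm k M M) w := fun w => rfl
  have hsym : (TensorProduct.comm k M M) s = s := by
    rw [hs, hτc r, map_add, S7.commComm]
    exact add_comm _ _
  have hLie : ∀ ξ z : M, B (B ξ z) = B ξ ∘ₗ B z - B z ∘ₗ B ξ := by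
    intro ξ z; ext a
    simp only [LinearMap.sub_apply, LinearMap.comp_apply]
    rw [eq_sub_iff_add_eq]
    exact (hjac ξ z a).symm
  have hcov : ∀ ξ z : M, Trip.bco B r (B ξ z) = Trip.adT B ξ (Trip.bco B r z) := by
    intro ξ z
    rw [hbco, hbco, hadT]
    have h1 : TensorProduct.map (B ξ) LinearMap.id (TensorProduct.map LinearMap.id (B z) s)
        = - TensorProduct.map LinearMap.id (B z ∘ₗ B ξ) s := by
      rw [← S7.mapSplit, S7.mapSplit' (B ξ) (B z) s, hinv2 ξ, map_neg, ← S7.mapCompR]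
    have h2 : TensorProduct.map LinearMap.id (B ξ) (TensorProduct.map LinearMap.id (B z) s)
        = TensorProduct.map LinearMap.id (B ξ ∘ₗ B z) s := (S7.mapCompR _ _ _).symm
    rw [h1, h2, hLie ξ z, S7.mapSubRight, LinearMap.sub_apply]
    abel
  have hanti : Trip.Antico (Trip.bco B r) := by
    intro z
    rw [hbco, hτc, S7.commMap, hsym, add_comm]
    exact hinv0 z
  have hact : ∀ (t : M ⊗[k] M) (a b : M),
      Trip.actOf B t (a ⊗ₜ[k] b) = TensorProduct.map (B.flip a) (B.flip b) t := by
    intro t a b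
    induction t using TensorProduct.induction_on with
    | zero => simp [Trip.actOf]
    | tmul u v => simp [Trip.actOf]
    | add u v hu hv =>
        simp only [Trip.actOf, map_add, LinearMap.add_apply] at hu hv ⊢
        rw [hu, hv]
  have hinf : ∀ a b : M, Trip.infBr B r a b = Trip.bco B r (B a b) := by
    intro a b
    have e0 : Trip.infBr B r a b
        = Trip.actOf B s (a ⊗ₜ[k] b) - Trip.actOf B s (b ⊗ₜ[k] a) := by
      rw [Trip.infBr, ← hs, map_sub]
    rw [e0, hact, hact]
    simp only [hflip, S7.mapNegLeft, S7.mapNegRight, neg_neg, map_neg]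
    have e1 : TensorProduct.map (B a) (B b) s
        = - TensorProduct.map LinearMap.id (B b ∘ₗ B a) s := by
      rw [S7.mapSplit' (B a) (B b) s, hinv2 a, map_neg, ← S7.mapCompR]
    have e2 : TensorProduct.map (B b) (B a) s
        = - TensorProduct.map LinearMap.id (B a ∘ₗ B b) s := by
      rw [S7.mapSplit' (B b) (B a) s, hinv2 b, map_neg, ← S7.mapCompR]
    rw [e1, e2, hbco, hLie a b, S7.mapSubRight, LinearMap.sub_apply]
    abel
  have hpart5 : ∀ a b : M, Trip.bco B r (B a b)
      = Trip.adT B a (Trip.bco B r b) - Trip.adT B b (Trip.bco B r a)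
        - Trip.infBr B r a b := by
    intro a b
    rw [← hcov a b, ← hcov b a, hinf a b, hskew b a, map_neg]
    abel
  have hcoj : Trip.CoJacobi (Trip.bco B r) := by
    intro y
    have hδeq : Trip.bco B r = - S7.Jm B s := by
      ext a
      rw [LinearMap.neg_apply, S7.Jm_apply, hbco a, hinv1 a]
    have hstep1 : TensorProduct.map (Trip.bco B r) LinearMap.id (Trip.bco B r y)
        = - TensorProduct.map (S7.Jm B s) (B y) s := by
      rw [hbco y, ← S7.mapSplit (Trip.bco B r) (B y) s, hδeq, S7.mapNegLeft,
        LinearMap.neg_apply]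
    have hρasc : ∀ z : (M ⊗[k] M) ⊗[k] M,
        (Trip.ρ k M) ((TensorProduct.assoc k M M M) z)
          = (TensorProduct.comm k (M ⊗[k] M) M) z := by
      intro z; simp [Trip.ρ]
    have g2 : ∀ (m : M) (w : M ⊗[k] M),
        (Trip.ρ k M) (m ⊗ₜ[k] w)
          = S7.sig k M (((TensorProduct.comm k M M) w) ⊗ₜ[k] m) := by
      intro m w
      induction w using TensorProduct.induction_on with
      | zero => simp
      | tmul u v => simp [Trip.ρ]
      | add u v hu hv =>
          simp only [tmul_add, map_add, add_tmul] at hu hv ⊢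
          rw [hu, hv]
    have g3 : ∀ (w : M ⊗[k] M) (m : M),
        S7.s12 k M (S7.sig k M (w ⊗ₜ[k] m)) = m ⊗ₜ[k] w := by
      intro w m
      induction w using TensorProduct.induction_on with
      | zero => simp
      | tmul u v => simp
      | add u v hu hv =>
          simp only [tmul_add, map_add, add_tmul] at hu hv ⊢
          rw [hu, hv]
    have g4 : ∀ (w : M ⊗[k] M) (m : M),
        S7.s12 k M ((TensorProduct.assoc k M M M) (w ⊗ₜ[k] m))
          = (TensorProduct.assoc k M M M) (((TensorProduct.comm k M M) w) ⊗ₜ[k] m) := by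
      intro w m
      induction w using TensorProduct.induction_on with
      | zero => simp
      | tmul u v => simp
      | add u v hu hv =>
          simp only [map_add, add_tmul] at hu hv ⊢
          rw [hu, hv]
    have g5 : ∀ (f : M →ₗ[k] M) (w : M ⊗[k] M) (m : M),
        TensorProduct.map f LinearMap.id ((TensorProduct.assoc k M M M) (w ⊗ₜ[k] m))
          = (TensorProduct.assoc k M M M)
              ((TensorProduct.map f LinearMap.id w) ⊗ₜ[k] m) := by
      intro f w m
      induction w using TensorProduct.induction_on with
      | zero => simp
      | tmul u v => simp
      | add u v hu hv =>
          simp only [map_add, add_tmul] at hu hv ⊢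
          rw [hu, hv]
    have hK1e : ∀ u : M ⊗[k] M,
        (TensorProduct.assoc k M M M) (TensorProduct.map (S7.Jm B s) (B y) u)
          = - S7.Th B s (TensorProduct.map LinearMap.id (B y) u) := by
      intro u
      induction u using TensorProduct.induction_on with
      | zero => simp
      | tmul a b =>
          rw [TensorProduct.map_tmul, TensorProduct.map_tmul, S7.Jm_apply,
            LinearMap.id_coe, id_eq, S7.Th_tmul, hflip a, S7.mapNegLeft,
            LinearMap.neg_apply, neg_tmul, map_neg, neg_neg]
      | add u v hu hv =>
          simp only [map_add, hu, hv, neg_add]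
    have hK6e : ∀ u : M ⊗[k] M,
        (TensorProduct.comm k (M ⊗[k] M) M) (TensorProduct.map (S7.Jm B s) (B y) u)
          = S7.s12 k M (S7.Lam B s y u) := by
      intro u
      induction u using TensorProduct.induction_on with
      | zero => simp
      | tmul a b =>
          rw [TensorProduct.map_tmul, TensorProduct.comm_tmul, S7.Lam_tmul, g3,
            S7.Jm_apply]
      | add u v hu hv =>
          simp only [map_add, hu, hv]
    have hK2e : ∀ u : M ⊗[k] M,
        (Trip.ρ k M) ((TensorProduct.comm k (M ⊗[k] M) M)
            (TensorProduct.map (S7.Jm B s) (B y) u))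
          = - S7.Lam B s y u := by
      intro u
      induction u using TensorProduct.induction_on with
      | zero => simp
      | tmul a b =>
          rw [TensorProduct.map_tmul, TensorProduct.comm_tmul, g2, S7.Jm_apply,
            S7.commMap, hsym, hinv1 a, S7.Lam_tmul, neg_tmul, map_neg]
      | add u v hu hv =>
          simp only [map_add, hu, hv, neg_add]
    have hXiL : ∀ (a b : M) (v : M ⊗[k] M), S7.Xi2 B y ((a ⊗ₜ[k] b) ⊗ₜ[k] v)
        = S7.sig k M ((TensorProduct.map (B a) LinearMap.id v) ⊗ₜ[k] (B y b)) := by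
      intro a b v
      induction v using TensorProduct.induction_on with
      | zero => simp
      | tmul c d => simp
      | add u v hu hv =>
          simp only [tmul_add, map_add, add_tmul] at hu hv ⊢
          rw [hu, hv]
    have hXiL2 : ∀ u : M ⊗[k] M, S7.Xi2 B y (u ⊗ₜ[k] s) = S7.Lam B s y u := by
      intro u
      induction u using TensorProduct.induction_on with
      | zero => simp
      | tmul a b => rw [hXiL a b s, S7.Lam_tmul]
      | add u v hu hv =>
          simp only [add_tmul, map_add] at hu hv ⊢
          rw [hu, hv]
    have hXiR : ∀ (c d : M) (w : M ⊗[k] M), S7.Xi2 B y (w ⊗ₜ[k] (c ⊗ₜ[k] d))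
        = (TensorProduct.assoc k M M M)
            ((TensorProduct.map (B.flip c) (B y) w) ⊗ₜ[k] d) := by
      intro c d w
      induction w using TensorProduct.induction_on with
      | zero => simp
      | tmul a b => simp
      | add u v hu hv =>
          simp only [add_tmul, map_add] at hu hv ⊢
          rw [hu, hv]
    have hXiR2 : ∀ v : M ⊗[k] M, S7.Xi2 B y (s ⊗ₜ[k] v) = S7.Th2 B s y v := by
      intro v
      induction v using TensorProduct.induction_on with
      | zero => simp
      | tmul c d => rw [hXiR c d s, S7.Th2_tmul]
      | add u v hu hv =>
          simp only [tmul_add, map_add] at hu hv ⊢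
          rw [hu, hv]
    have hbridge : S7.Lam B s y s = S7.Th2 B s y s := by
      rw [← hXiL2 s, hXiR2 s]
    have hK7e : ∀ v : M ⊗[k] M,
        S7.s12 k M (S7.Th2 B s y v)
          = - TensorProduct.map (B y) LinearMap.id (S7.Th B s v) := by
      intro v
      induction v using TensorProduct.induction_on with
      | zero => simp
      | tmul c d =>
          have hc1 : TensorProduct.map LinearMap.id (B.flip c) s
              = TensorProduct.map (B c) LinearMap.id s := by
            rw [hflip c, S7.mapNegRight, LinearMap.neg_apply, hinv1 c, neg_neg]
          have hc2 : TensorProduct.map (B.flip c) LinearMap.id s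
              = - TensorProduct.map (B c) LinearMap.id s := by
            rw [hflip c, S7.mapNegLeft, LinearMap.neg_apply]
          rw [S7.Th2_tmul, S7.Th_tmul, g4, S7.commMap, hsym,
            S7.mapSplit (B y) (B.flip c) s, hc1, g5, hc2, map_neg, neg_tmul, map_neg,
            neg_neg]
      | add u v hu hv =>
          simp only [map_add, hu, hv, neg_add]
    have hJacM : ∀ c : M, B y ∘ₗ B.flip c = B.flip c ∘ₗ B y + B.flip (B y c) := by
      intro c; ext a
      simp only [LinearMap.comp_apply, LinearMap.add_apply, LinearMap.flip_apply]
      exact hjac y a c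
    have hK5e : ∀ v : M ⊗[k] M,
        TensorProduct.map (B y) LinearMap.id (S7.Th B s v)
          = - S7.Th2 B s y v + S7.Th B s (TensorProduct.map (B y) LinearMap.id v) := by
      intro v
      induction v using TensorProduct.induction_on with
      | zero => simp
      | tmul c d =>
          rw [S7.Th_tmul, g5, ← S7.mapCompL, hJacM c, TensorProduct.map_add_left,
            LinearMap.add_apply, S7.mapCompL, hinv2 y, map_neg, ← S7.mapSplit,
            TensorProduct.map_tmul, LinearMap.id_coe, id_eq, S7.Th2_tmul, S7.Th_tmul,
            add_tmul, neg_tmul, map_add, map_neg]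
      | add u v hu hv =>
          simp only [map_add, hu, hv, neg_add]
          abel
    rw [hstep1]
    simp only [map_neg]
    rw [← neg_add, ← neg_add, neg_eq_zero]
    rw [hρasc, hK2e s, hK6e s, hK1e s, hinv1 y, map_neg, neg_neg, hbridge, hK7e s,
      hK5e s]
    abel
  exact ⟨fun ξ u v => hjac ξ u v, hcov, hanti, hcoj, hpart5⟩
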